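/- For every i and every pair of consecutive entries p, q of the i-th Stern-Brocot half-sequence SB i, the mediant is already in lowest terms: gcd(num(p) + num(q), den(p) + den(q)) = 1. Consequently the rational (num(p)+num(q))/(den(p)+den(q)) has numerator num(p)+num(q) and denominator den(p)+den(q). -/

import Mathlib

/-- The mediant of two rationals `p` and `q`: `(num p + num q) / (den p + den q)`. -/
def mediant (p q : ℚ) : ℚ := ((p.num + q.num : ℤ) : ℚ) / ((p.den + q.den : ℕ) : ℚ)

/-- Insert between every pair of consecutive entries of a list their mediant. -/
def insertMediants : List ℚ → List ℚ
  | [] => []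
  | [p] => [p]
  | p :: q :: rest => p :: mediant p q :: insertMediants (q :: rest)

/-- The Stern-Brocot half-sequences: `SB 0 = [0/1, 1/1]`, and each successive
sequence is obtained by inserting mediants between consecutive entries. -/
def SB : ℕ → List ℚ
  | 0 => [0, 1]
  | i + 1 => insertMediants (SB i)

/-- Unimodularity relation between consecutive entries. -/
def Det (p q : ℚ) : Prop := q.num * p.den - p.num * q.den = 1

lemma det_gcd {p q : ℚ} (h : Det p q) :
    Int.gcd (p.num + q.num) ((p.den : ℤ) + (q.den : ℤ)) = 1 := by
  rw [← Int.isCoprime_iff_gcd_eq_one]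
  exact ⟨-(q.den : ℤ), q.num, by unfold Det at h; ring_nf; linarith⟩

lemma mediant_num_den {p q : ℚ} (h : Det p q) :
    (mediant p q).num = p.num + q.num ∧ (mediant p q).den = p.den + q.den := by
  have hb : (0 : ℤ) < ((p.den + q.den : ℕ) : ℤ) := by
    have := p.pos; have := q.pos; positivity
  have hcast : ((p.den + q.den : ℕ) : ℤ) = (p.den : ℤ) + (q.den : ℤ) := by push_cast; ring
  have hcop : Nat.Coprime (p.num + q.num).natAbs ((p.den + q.den : ℕ) : ℤ).natAbs := by
    have h1 := det_gcd h
    rw [Int.gcd] at h1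
    rw [hcast]
    exact h1
  constructor
  · exact Rat.num_div_eq_of_coprime hb hcop
  · have := Rat.den_div_eq_of_coprime hb hcop
    unfold mediant
    push_cast at this ⊢
    omega

lemma chain_insertMediants : ∀ l : List ℚ, List.Chain' Det l →
    List.Chain' Det (insertMediants l)
  | [], _ => by simp [insertMediants, List.Chain']
  | [p], _ => by simp [insertMediants, List.Chain']
  | p :: q :: rest, h => by
    obtain ⟨hpq, hrest⟩ := List.isChain_cons_cons.mp h
    have ⟨hn, hd⟩ := mediant_num_den hpq
    have ih := chain_insertMediants (q :: rest) hrest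
    have hq : ∃ s, insertMediants (q :: rest) = q :: s := by
      cases rest <;> exact ⟨_, rfl⟩
    obtain ⟨s, hs⟩ := hq
    rw [insertMediants, hs, List.Chain', List.isChain_cons_cons, List.isChain_cons_cons]
    refine ⟨?_, ?_, hs ▸ ih⟩
    · unfold Det at hpq ⊢
      rw [hn, hd]; push_cast; linarith
    · unfold Det at hpq ⊢
      rw [hn, hd]; push_cast; linarith

lemma SB_chain (i : ℕ) : List.Chain' Det (SB i) := by
  induction i with
  | zero => simp [SB, Det, List.Chain', List.isChain_cons_cons]
  | succ n ih => exact chain_insertMediants _ ih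

/-- For every pair of consecutive entries `p, q` of the `i`-th Stern-Brocot half-sequence,
the mediant is already in lowest terms: `gcd (num p + num q) (den p + den q) = 1`;
consequently the mediant rational has numerator `num p + num q` and denominator
`den p + den q`. -/
theorem sternBrocot_mediant_reduced (i j : ℕ) (hj : j + 1 < (SB i).length) :
    Int.gcd ((SB i)[j].num + (SB i)[j + 1].num)
        (((SB i)[j].den : ℤ) + ((SB i)[j + 1].den : ℤ)) = 1 ∧
    (mediant (SB i)[j] (SB i)[j + 1]).num = (SB i)[j].num + (SB i)[j + 1].num ∧
    (mediant (SB i)[j] (SB i)[j + 1]).den = (SB i)[j].den + (SB i)[j + 1].den := by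
  have hdet : Det (SB i)[j] (SB i)[j + 1] :=
    List.isChain_iff_getElem.mp (SB_chain i) j (by omega)
  exact ⟨det_gcd hdet, mediant_num_den hdet⟩
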